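/- Let X be a separable infinite-dimensional Fréchet space over 𝕂 (𝕂 = ℝ or ℂ) that admits no continuous norm. Then there exists a countable dense linearly independent subset A of X that is not an orbit: there are no continuous linear operator T on X and x ∈ X with A = {Tⁿx : n ≥ 0}. -/

import Mathlib

noncomputable section

/-- Generic dependent-choice style construction of a sequence where the condition at step `n`
only depends on the values at indices `< n`. -/
theorem exists_seq_forall_prev' {X : Type*} [Nonempty X] (C : ℕ → X → (ℕ → X) → Prop)
    (hC : ∀ n (f g : ℕ → X), (∀ m, m < n → f m = g m) → ∀ x, C n x f → C n x g)
    (hex : ∀ n (f : ℕ → X), ∃ x, C n x f) :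
    ∃ d : ℕ → X, ∀ n, C n (d n) d := by
  classical
  let F : (ℕ → X) → ℕ → (ℕ → X) := fun f n => Function.update f n (hex n f).choose
  let g : ℕ → (ℕ → X) := fun n => Nat.rec (fun _ => Classical.arbitrary X) (fun n f => F f n) n
  have hg : ∀ n, g (n + 1) = F (g n) n := fun n => rfl
  have hagree : ∀ n m, m < n → g n m = g (m + 1) m := by
    intro n
    induction n with
    | zero => intro m hm; omega
    | succ k ih =>
      intro m hm
      rcases Nat.lt_succ_iff_lt_or_eq.mp hm with h | h
      · rw [hg k]
        have : F (g k) k m = g k m := Function.update_of_ne (by omega) _ _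
        rw [this]
        exact ih m h
      · subst h; rfl
  refine ⟨fun k => g (k + 1) k, fun n => ?_⟩
  have hdn : g (n + 1) n = (hex n (g n)).choose := by
    rw [hg n]; exact Function.update_self _ _ _
  have h1 : C n (g (n + 1) n) (g n) := by rw [hdn]; exact (hex n (g n)).choose_spec
  exact hC n (g n) _ (fun m hm => (hagree n m hm)) _ h1

theorem injective_of_infinite_shift' {α : Type*} {a : ℕ → α}
    (hshift : ∀ i j, a i = a j → a (i + 1) = a (j + 1))
    (hinf : (Set.range a).Infinite) : Function.Injective a := by
  by_contra hni
  apply hinf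
  rw [Function.Injective] at hni
  push_neg at hni
  obtain ⟨i, j, hij, hne⟩ := hni
  wlog hlt : i < j generalizing i j
  · exact this j i hij.symm (Ne.symm hne) (by omega)
  have key : ∀ t, a (j + t) = a (i + t) := by
    intro t; induction t with
    | zero => simpa using hij.symm
    | succ s ih =>
      exact hshift _ _ ih
  have hsub : Set.range a ⊆ a '' Set.Iio j := by
    rintro _ ⟨n, rfl⟩
    induction n using Nat.strong_induction_on with
    | _ n IH =>
      rcases lt_or_ge n j with h | h
      · exact ⟨n, h, rfl⟩
      · have h1 : a n = a (i + (n - j)) := by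
          have := key (n - j); rwa [Nat.add_sub_cancel' h] at this
        have h2 : i + (n - j) < n := by omega
        rw [h1]; exact IH _ h2
  exact ((Set.finite_Iio j).image a).subset hsub

theorem tail_absorb' {α : Type*} {a : ℕ → α} (hinj : Function.Injective a)
    {W D Sh : Set α} (hWD : ∀ z, z ∈ W → z ∉ D) (hD : D.Infinite) (hDr : D ⊆ Set.range a)
    (hW : W.Infinite) (hWr : W ⊆ Set.range a) (hSh : Sh.Finite)
    (hstep : ∀ n, a n ∈ W → a n ∉ Sh → a (n + 1) ∈ W) : False := by
  have hge : ∀ S : Set ℕ, S.Infinite → ∀ N : ℕ, ∃ n ∈ S, N ≤ n := by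
    intro S hS N
    by_contra h; push_neg at h
    exact hS ((Set.finite_Iio N).subset fun n hn => h n hn)
  have hShp : (a ⁻¹' Sh).Finite := Set.Finite.preimage hinj.injOn hSh
  obtain ⟨N, hN⟩ : ∃ N : ℕ, ∀ n, a n ∈ Sh → n < N := by
    rcases hShp.bddAbove with ⟨N, hN⟩
    exact ⟨N + 1, fun n hn => by have := hN hn; omega⟩
  obtain ⟨n₀, hn₀W, hn₀N⟩ := hge _ (hW.preimage hWr) N
  have hall : ∀ m, n₀ ≤ m → a m ∈ W := by
    intro m hm
    induction m, hm using Nat.le_induction with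
    | base => exact hn₀W
    | succ m hm ih =>
      refine hstep m ih fun hSh' => ?_
      have := hN m hSh'
      omega
  obtain ⟨m, hmD, hmge⟩ := hge _ (hD.preimage hDr) n₀
  exact hWD _ (hall m hmge) hmD


/-- In a separable infinite-dimensional Fréchet space admitting no continuous
norm, there is a countable dense linearly independent subset which is not an orbit of any
continuous linear operator. -/
theorem exists_nonorbit_of_no_continuous_norm
    (𝕜 : Type*) [RCLike 𝕜] (X : Type*) [AddCommGroup X] [Module 𝕜 X]
    [Module ℝ X] [IsScalarTower ℝ 𝕜 X]
    -- X is a Fréchet space: a complete metrizable locally convex TVS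
    [UniformSpace X] [IsUniformAddGroup X] [ContinuousSMul 𝕜 X]
    [LocallyConvexSpace ℝ X] [CompleteSpace X] [TopologicalSpace.MetrizableSpace X]
    -- separable and infinite dimensional
    [TopologicalSpace.SeparableSpace X] (hinf : ¬ FiniteDimensional 𝕜 X)
    -- X possesses no continuous norm
    (hnonorm : ¬ ∃ N : Seminorm 𝕜 X, Continuous N ∧ ∀ x : X, N x = 0 → x = 0) :
    ∃ A : Set X, A.Countable ∧ A.Infinite ∧ Dense A ∧
      LinearIndependent 𝕜 ((↑) : A → X) ∧
      ¬ ∃ (T : X →L[𝕜] X) (x : X), A = Set.range (fun n : ℕ => (T ^ n) x) := by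
  classical
  -- instances
  haveI : ContinuousSMul ℝ X := by
    refine ⟨?_⟩
    have h : (fun q : ℝ × X => q.1 • q.2) = fun q : ℝ × X => ((q.1 : 𝕜) • q.2) := by
      funext q
      rw [← algebraMap_smul 𝕜 q.1 q.2, RCLike.algebraMap_eq_ofReal]
    rw [h]
    exact (RCLike.continuous_ofReal.comp continuous_fst).smul continuous_snd
  haveI : Filter.IsCountablyGenerated (uniformity X) := by
    rw [uniformity_eq_comap_nhds_zero X]; infer_instance
  haveI : SecondCountableTopology X := UniformSpace.secondCountable_of_separable X
  haveI hnontriv : Nontrivial X := by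
    by_contra h
    rw [not_nontrivial_iff_subsingleton] at h
    exact hinf (Module.Finite.of_basis (Module.Basis.empty _ (ι := Fin 0)))
  obtain ⟨x₀, hx₀⟩ := exists_ne (0 : X)
  -- seminorm family from absolutely convex open basis
  have hB : (nhds (0:X)).HasBasis
      (fun s : Set X => (0:X) ∈ s ∧ IsOpen s ∧ Balanced 𝕜 s ∧ Convex ℝ s) id := by
    refine (LocallyConvexSpace.convex_basis_zero ℝ X).to_hasBasis (fun s hs => ?_)
      (fun s hs => ⟨s, ⟨hs.2.1.mem_nhds hs.1, hs.2.2.2⟩, subset_rfl⟩)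
    set t : Set X := {x | ∀ a : 𝕜, ‖a‖ ≤ 1 → a • x ∈ s} with ht
    have htn : t ∈ nhds (0:X) := Filter.mem_of_superset (balancedCore_mem_nhds_zero hs.1)
      (fun x hx a ha => balancedCore_subset s ((balancedCore_balanced s).smul_mem ha hx))
    have htb : Balanced 𝕜 t := by
      rw [balanced_iff_smul_mem]
      intro b hb x hx
      simp only [ht, Set.mem_setOf_eq] at hx ⊢
      intro a ha
      rw [smul_smul]
      exact hx _ (by rw [norm_mul]; exact mul_le_one₀ ha (norm_nonneg _) hb)
    have htc : Convex ℝ t := by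
      intro x hx y hy c d hc hd hcd
      simp only [ht, Set.mem_setOf_eq] at hx hy ⊢
      intro a ha
      rw [smul_add, smul_comm a c x, smul_comm a d y]
      exact hs.2 (hx a ha) (hy a ha) hc hd hcd
    have h0 : (0:X) ∈ interior t := mem_interior_iff_mem_nhds.mpr htn
    refine ⟨interior t, ⟨h0, isOpen_interior, htb.interior h0, htc.interior⟩, ?_⟩
    refine interior_subset.trans (fun x hx => ?_)
    simpa using hx 1 (by simp)
  obtain ⟨u, hu, hbasis⟩ := hB.exists_antitone_subbasis
  let q : ℕ → Seminorm 𝕜 X := fun n =>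
    gaugeSeminorm (hu n).2.2.1 (hu n).2.2.2 (absorbent_nhds_zero ((hu n).2.1.mem_nhds (hu n).1))
  have hball : ∀ n, (q n).ball 0 1 = u n := fun n => gaugeSeminorm_ball_one (hu n).2.1
  have hqc : ∀ n, Continuous (q n) := fun n =>
    Seminorm.continuous (r := 1) (by rw [hball n]; exact (hu n).2.1.mem_nhds (hu n).1)
  have hqbig : ∀ x : X, x ≠ 0 → ∃ n, 1 ≤ q n x := by
    intro x hx
    obtain ⟨n, -, hn⟩ := hbasis.toHasBasis.mem_iff.mp (compl_singleton_mem_nhds (Ne.symm hx))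
    exact ⟨n, one_le_gauge_of_notMem ((hu n).2.2.2.starConvex (hu n).1)
      ((absorbent_nhds_zero ((hu n).2.1.mem_nhds (hu n).1)).absorbs)
      (fun hmem => hn hmem rfl)⟩
  obtain ⟨n₀, hn₀⟩ := hqbig x₀ hx₀
  let p : ℕ → Seminorm 𝕜 X := fun k => q n₀ ⊔ (Finset.range (k + 1)).sup q
  have hpq : ∀ n k, n ≤ k → q n ≤ p k := fun n k h =>
    le_sup_of_le_right (Finset.le_sup (Finset.mem_range.mpr (by omega)))
  have hpmono : ∀ k l, k ≤ l → p k ≤ p l := fun k l h =>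
    sup_le_sup le_rfl (Finset.sup_mono (Finset.range_subset_range.mpr (by omega)))
  have hpc : ∀ k, Continuous (p k) := by
    have hsup : ∀ s : Finset ℕ, Continuous ((s.sup q : Seminorm 𝕜 X)) := by
      intro s
      induction s using Finset.induction_on with
      | empty => rw [Finset.sup_empty]; rw [show ⇑(⊥ : Seminorm 𝕜 X) = (0 : X → ℝ) from Seminorm.coe_bot]; exact continuous_const
      | insert _ _ hns ih =>
        rw [Finset.sup_insert, Seminorm.coe_sup]
        exact (hqc _).sup ih
    intro k
    rw [show ⇑(p k) = ⇑(q n₀) ⊔ ⇑((Finset.range (k + 1)).sup q) from Seminorm.coe_sup _ _]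
    exact (hqc n₀).sup (hsup _)
  have hsep : ∀ x : X, x ≠ 0 → ∃ k, p k x ≠ 0 := by
    intro x hx
    obtain ⟨n, hn⟩ := hqbig x hx
    have h2 := (Seminorm.le_def.mp (hpq n n le_rfl)) x
    exact ⟨n, by linarith⟩
  have hp0x₀ : p 0 x₀ ≠ 0 := by
    have h2 := (Seminorm.le_def.mp (le_sup_left : q n₀ ≤ p 0)) x₀
    linarith
  -- cofinality
  have hcof : ∀ Q : Seminorm 𝕜 X, Continuous Q → ∃ k, ∀ y, Q y ≤ p k y := by
    intro Q hQ
    obtain ⟨n, -, hn⟩ := hbasis.toHasBasis.mem_iff.mp (Seminorm.ball_mem_nhds hQ one_pos)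
    have himp : ∀ y, q n y < 1 → Q y < 1 := by
      intro y hy
      have hyu : y ∈ u n := by rw [← hball n]; exact (Seminorm.mem_ball_zero _).mpr hy
      exact (Seminorm.mem_ball_zero _).mp (hn hyu)
    refine ⟨n, fun y => le_trans ?_ ((Seminorm.le_def.mp (hpq n n le_rfl)) y)⟩
    refine le_of_forall_pos_le_add fun ε hε => ?_
    have hrpos : (0:ℝ) < q n y + ε := add_pos_of_nonneg_of_pos (apply_nonneg _ _) hε
    set c : 𝕜 := ((q n y + ε : ℝ) : 𝕜) with hc
    have hcn : ‖c‖ = q n y + ε := by rw [hc, RCLike.norm_ofReal, abs_of_pos hrpos]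
    have hc0 : c ≠ 0 := by
      intro h; rw [h, norm_zero] at hcn; linarith
    have h1 : q n (c⁻¹ • y) < 1 := by
      rw [map_smul_eq_mul, norm_inv, hcn]
      have hlt : q n y < q n y + ε := by linarith
      calc (q n y + ε)⁻¹ * q n y < (q n y + ε)⁻¹ * (q n y + ε) :=
            mul_lt_mul_of_pos_left hlt (inv_pos.mpr hrpos)
        _ = 1 := inv_mul_cancel₀ (ne_of_gt hrpos)
    have h2 : Q (c⁻¹ • y) < 1 := himp _ h1
    have h3 : Q y = ‖c‖ * Q (c⁻¹ • y) := by
      rw [← map_smul_eq_mul Q, smul_inv_smul₀ hc0]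
    rw [h3, hcn]
    calc (q n y + ε) * Q (c⁻¹ • y) ≤ (q n y + ε) * 1 :=
          mul_le_mul_of_nonneg_left h2.le hrpos.le
      _ = q n y + ε := mul_one _
  -- kernels
  let K : ℕ → Submodule 𝕜 X := fun k =>
    { carrier := {x | p k x = 0}
      add_mem' := fun {x y} hx hy => le_antisymm
        (by
          calc p k (x + y) ≤ p k x + p k y := map_add_le_add _ _ _
            _ = 0 := by rw [Set.mem_setOf_eq] at hx hy; rw [hx, hy, add_zero])
        (apply_nonneg _ _)
      zero_mem' := map_zero _
      smul_mem' := fun c x hx => by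
        have hx' : p k x = 0 := hx
        show p k (c • x) = 0
        rw [map_smul_eq_mul, hx', mul_zero] }
  have hKmem : ∀ k y, y ∈ K k ↔ p k y = 0 := fun _ _ => Iff.rfl
  have hKcl : ∀ k, IsClosed ((K k : Set X)) := by
    intro k
    have : (K k : Set X) = (p k) ⁻¹' {0} := rfl
    rw [this]
    exact isClosed_singleton.preimage (hpc k)
  have hKne : ∀ k, ∃ y ∈ K k, y ≠ 0 := by
    intro k
    by_contra h; push_neg at h
    exact hnonorm ⟨p k, hpc k, fun x hx => h x ((hKmem k x).mpr hx)⟩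
  have hKmono : ∀ k l, k ≤ l → K l ≤ K k := by
    intro k l h x hx
    have h1 : p k x ≤ p l x := (Seminorm.le_def.mp (hpmono k l h)) x
    have h2 : p l x = 0 := hx
    exact (hKmem k x).mpr (le_antisymm (by linarith) (apply_nonneg _ _))
  have hKfd : ∀ k, ¬ FiniteDimensional 𝕜 (K k) := by
    intro k₀ hfd
    haveI := hfd
    haveI hfdj : ∀ j, FiniteDimensional 𝕜 (K (k₀ + j)) := fun j =>
      Submodule.finiteDimensional_of_le (hKmono k₀ (k₀ + j) (by omega))
    let r : ℕ → ℕ := fun j => Module.finrank 𝕜 (K (k₀ + j))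
    obtain ⟨c, ⟨j₀, hcj⟩, hmin⟩ := Nat.lt_wfRel.wf.has_min (Set.range r) ⟨r 0, 0, rfl⟩
    have heq : ∀ j, K (k₀ + (j₀ + j)) = K (k₀ + j₀) := by
      intro j
      haveI := hfdj j₀
      refine Submodule.eq_of_le_of_finrank_le (hKmono _ _ (by omega)) ?_
      have h1 : ¬ r (j₀ + j) < c := hmin _ ⟨j₀ + j, rfl⟩
      have h2 : r j₀ = c := hcj
      show r j₀ ≤ r (j₀ + j)
      omega
    obtain ⟨y, hyK, hy0⟩ := hKne (k₀ + j₀)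
    obtain ⟨k, hk⟩ := hsep y hy0
    have hyk : y ∈ K k := hKmono k (k₀ + (j₀ + k)) (by omega) (by rw [heq k]; exact hyK)
    exact hk ((hKmem k y).mp hyk)
  -- Baire category: avoid a countable-dimensional subspace and the kernel of `p 0`
  have good : ∀ s : Set X, s.Countable → ∀ U : Set X, IsOpen U → U.Nonempty →
      ∃ z, z ∈ U ∧ p 0 z ≠ 0 ∧ z ∉ Submodule.span 𝕜 s := by
    intro s hs U hUo hUne
    obtain ⟨g, hg⟩ := Set.Countable.exists_eq_range (hs.insert 0) (Set.insert_nonempty 0 s)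
    set O : ℕ ⊕ ℕ → Set X := fun i => Sum.elim
      (fun _ : ℕ => ((K 0 : Set X))ᶜ)
      (fun n => ((Submodule.span 𝕜 (g '' Set.Iio n) : Submodule 𝕜 X) : Set X)ᶜ) i with hO
    have hfinspan : ∀ n : ℕ, FiniteDimensional 𝕜 (Submodule.span 𝕜 (g '' Set.Iio n)) :=
      fun n => FiniteDimensional.span_of_finite 𝕜 ((Set.finite_Iio n).image g)
    have hOopen : ∀ i, IsOpen (O i) := by
      rintro (i | n)
      · exact (hKcl 0).isOpen_compl
      · haveI := hfinspan n
        exact (Submodule.closed_of_finiteDimensional _).isOpen_compl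
    have hOdense : ∀ i, Dense (O i) := by
      rintro (i | n)
      · refine interior_eq_empty_iff_dense_compl.mp ?_
        by_contra h
        have htop := Submodule.eq_top_of_nonempty_interior' (K 0)
          (Set.nonempty_iff_ne_empty.mpr h)
        exact hp0x₀ ((hKmem 0 x₀).mp (htop ▸ Submodule.mem_top))
      · refine interior_eq_empty_iff_dense_compl.mp ?_
        by_contra h
        have htop := Submodule.eq_top_of_nonempty_interior'
          (Submodule.span 𝕜 (g '' Set.Iio n)) (Set.nonempty_iff_ne_empty.mpr h)
        haveI := hfinspan n
        have hfd : FiniteDimensional 𝕜 (⊤ : Submodule 𝕜 X) := htop ▸ hfinspan n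
        exact hinf (Module.Finite.equiv Submodule.topEquiv)
    have hd : Dense (⋂ i, O i) := dense_iInter_of_isOpen hOopen hOdense
    obtain ⟨z, hzU, hzI⟩ := hd.inter_open_nonempty U hUo hUne
    rw [Set.mem_iInter] at hzI
    refine ⟨z, hzU, ?_, ?_⟩
    · intro h0
      exact (hzI (Sum.inl 0)) ((hKmem 0 z).mpr h0)
    · intro hzspan
      have hz' : z ∈ Submodule.span 𝕜 (insert 0 s) := by
        exact Submodule.span_mono (Set.subset_insert 0 s) hzspan
      rw [hg] at hz'
      obtain ⟨t, htsub, hzt⟩ := Submodule.mem_span_finite_of_mem_span hz'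
      obtain ⟨n, htn⟩ : ∃ n, (t : Set X) ⊆ g '' Set.Iio n := by
        refine ⟨t.sup (fun x => if h : ∃ i, g i = x then h.choose + 1 else 0), ?_⟩
        intro x hx
        have hex : ∃ i, g i = x := htsub hx
        have hle := Finset.le_sup (f := fun x => if h : ∃ i, g i = x then h.choose + 1 else 0) hx
        simp only [dif_pos hex] at hle
        exact ⟨hex.choose, Set.mem_Iio.mpr (by omega), hex.choose_spec⟩
      have : z ∈ Submodule.span 𝕜 (g '' Set.Iio n) :=
        Submodule.span_mono htn hzt
      exact (hzI (Sum.inr n)) this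
  -- countable basis of nonempty open sets
  obtain ⟨b, hbc, hbemp, hbb⟩ := TopologicalSpace.exists_countable_basis X
  have hbne : b.Nonempty := by
    obtain ⟨s, hsb, -, -⟩ := hbb.exists_subset_of_mem_open (Set.mem_univ (0 : X)) isOpen_univ
    exact ⟨s, hsb⟩
  obtain ⟨U, hUrange⟩ := Set.Countable.exists_eq_range hbc hbne
  have hUo : ∀ n, IsOpen (U n) := fun n => hbb.isOpen (by rw [hUrange]; exact ⟨n, rfl⟩)
  have hUne : ∀ n, (U n).Nonempty := by
    intro n
    rw [Set.nonempty_iff_ne_empty]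
    intro h
    exact hbemp (h ▸ (by rw [hUrange]; exact ⟨n, rfl⟩ : U n ∈ b))
  -- construction of w
  obtain ⟨w, hw⟩ := exists_seq_forall_prev'
      (fun n x f => x ∈ K n ∧ x ∉ Submodule.span 𝕜 (f '' Set.Iio n))
      (by
        intro n f g hfg x hx
        refine ⟨hx.1, ?_⟩
        have himg : f '' Set.Iio n = g '' Set.Iio n :=
          Set.image_congr fun a ha => hfg a ha
        rw [← himg]; exact hx.2)
      (by
        intro n f
        by_contra hcon
        apply hKfd n
        haveI := FiniteDimensional.span_of_finite 𝕜 ((Set.finite_Iio n).image f)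
        refine Submodule.finiteDimensional_of_le
          (S₂ := Submodule.span 𝕜 (f '' Set.Iio n)) (fun x hx => ?_)
        by_contra hxs
        exact hcon ⟨x, hx, hxs⟩)
  have hwK : ∀ n, w n ∈ K n := fun n => (hw n).1
  have hwspan : ∀ n, w n ∉ Submodule.span 𝕜 (w '' Set.Iio n) := fun n => (hw n).2
  have hwinj : Function.Injective w := by
    intro i j hij
    by_contra hne
    rcases Nat.lt_or_ge i j with h | h
    · exact hwspan j (Submodule.subset_span ⟨i, h, hij⟩)
    · have h' : j < i := by omega
      exact hwspan i (Submodule.subset_span ⟨j, h', hij.symm⟩)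
  -- construction of d
  obtain ⟨d, hd⟩ := exists_seq_forall_prev'
      (fun n x f => x ∈ U n ∧ p 0 x ≠ 0 ∧
        x ∉ Submodule.span 𝕜 (Set.range w ∪ f '' Set.Iio n))
      (by
        intro n f g hfg x hx
        refine ⟨hx.1, hx.2.1, ?_⟩
        have himg : f '' Set.Iio n = g '' Set.Iio n :=
          Set.image_congr fun a ha => hfg a ha
        rw [← himg]; exact hx.2.2)
      (by
        intro n f
        obtain ⟨z, hz1, hz2, hz3⟩ := good (Set.range w ∪ f '' Set.Iio n)
          ((Set.countable_range w).union ((Set.finite_Iio n).image f).countable)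
          (U n) (hUo n) (hUne n)
        exact ⟨z, hz1, hz2, hz3⟩)
  have hdinj : Function.Injective d := by
    intro i j hij
    by_contra hne
    rcases Nat.lt_or_ge i j with h | h
    · exact (hd j).2.2 (Submodule.subset_span (Or.inr ⟨i, h, hij⟩))
    · have h' : j < i := by omega
      exact (hd i).2.2 (Submodule.subset_span (Or.inr ⟨j, h', hij.symm⟩))
  have hdw : ∀ n m, d n ≠ w m := by
    intro n m h
    exact (hd n).2.2 (Submodule.subset_span (Or.inl ⟨m, h.symm⟩))
  -- the set A
  refine ⟨Set.range w ∪ Set.range d, ?_, ?_, ?_, ?_, ?_⟩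
  · exact (Set.countable_range w).union (Set.countable_range d)
  · exact (Set.infinite_range_of_injective hdinj).mono Set.subset_union_right
  · -- density
    rw [dense_iff_inter_open]
    intro V hV hVne
    obtain ⟨z, hz⟩ := hVne
    obtain ⟨s, hsb, hzs, hsV⟩ := hbb.exists_subset_of_mem_open hz hV
    rw [hUrange] at hsb
    obtain ⟨n, rfl⟩ := hsb
    exact ⟨d n, hsV (hd n).1, Or.inr ⟨n, rfl⟩⟩
  · -- linear independence
    have hiio : ∀ (v : ℕ → X) (n : ℕ), v '' Set.Iio (n + 1) = insert (v n) (v '' Set.Iio n) := by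
      intro v n
      ext z
      simp only [Set.mem_image, Set.mem_Iio, Set.mem_insert_iff]
      constructor
      · rintro ⟨i, hi, rfl⟩
        rcases Nat.lt_succ_iff_lt_or_eq.mp hi with h | h
        · exact Or.inr ⟨i, h, rfl⟩
        · subst h; exact Or.inl rfl
      · rintro (rfl | ⟨i, hi, rfl⟩)
        · exact ⟨n, by omega, rfl⟩
        · exact ⟨i, by omega, rfl⟩
    have hwind : ∀ n, LinearIndependent 𝕜 ((↑) : (w '' Set.Iio n : Set X) → X) := by
      intro n
      induction n with
      | zero =>
        have hi0 : Set.Iio (0 : ℕ) = ∅ := by ext i; simp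
        rw [hi0, Set.image_empty]
        exact linearIndependent_empty 𝕜 X
      | succ n ih =>
        rw [hiio w n]
        exact LinearIndepOn.id_insert ih (hwspan n)
    have hsind : ∀ n, LinearIndependent 𝕜
        ((↑) : (Set.range w ∪ d '' Set.Iio n : Set X) → X) := by
      intro n
      induction n with
      | zero =>
        have hi0 : Set.Iio (0 : ℕ) = ∅ := by ext i; simp
        rw [hi0, Set.image_empty, Set.union_empty]
        have h2 : Set.range w = ⋃ n, w '' Set.Iio n := by
          ext z
          constructor
          · rintro ⟨i, rfl⟩
            exact Set.mem_iUnion.mpr ⟨i + 1, ⟨i, Set.mem_Iio.mpr (by omega), rfl⟩⟩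
          · intro h
            obtain ⟨n, hn⟩ := Set.mem_iUnion.mp h
            obtain ⟨i, -, rfl⟩ := hn
            exact ⟨i, rfl⟩
        rw [h2]
        refine linearIndepOn_iUnion_of_directed (v := id) ?_ hwind
        refine Monotone.directed_le ?_
        intro i j hij
        exact Set.image_mono (fun x hx => lt_of_lt_of_le hx hij)
      | succ n ih =>
        have h1 : (Set.range w ∪ d '' Set.Iio (n + 1) : Set X)
            = insert (d n) (Set.range w ∪ d '' Set.Iio n) := by
          rw [hiio d n, Set.union_insert]
        rw [h1]
        refine LinearIndepOn.id_insert ih ?_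
        exact (hd n).2.2
    have h2 : (Set.range w ∪ Set.range d : Set X)
        = ⋃ n, (Set.range w ∪ d '' Set.Iio n : Set X) := by
      ext z
      constructor
      · rintro (h | ⟨i, rfl⟩)
        · exact Set.mem_iUnion.mpr ⟨0, Or.inl h⟩
        · exact Set.mem_iUnion.mpr ⟨i + 1, Or.inr ⟨i, Set.mem_Iio.mpr (by omega), rfl⟩⟩
      · intro h
        obtain ⟨n, hn⟩ := Set.mem_iUnion.mp h
        rcases hn with h | ⟨i, -, rfl⟩
        · exact Or.inl h
        · exact Or.inr ⟨i, rfl⟩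
    rw [h2]
    refine linearIndepOn_iUnion_of_directed (v := id) ?_ hsind
    refine Monotone.directed_le ?_
    intro i j hij
    exact Set.union_subset_union_right _ (Set.image_mono (fun x hx => lt_of_lt_of_le hx hij))
  · -- not an orbit
    rintro ⟨T, x, hA⟩
    set a : ℕ → X := fun n => (T ^ n) x with ha
    have hsucc : ∀ n, a (n + 1) = T (a n) := by
      intro n
      show (T ^ (n + 1)) x = T ((T ^ n) x)
      rw [pow_succ', ContinuousLinearMap.mul_apply]
    have hAinf : (Set.range a).Infinite := by
      rw [← hA]
      exact (Set.infinite_range_of_injective hdinj).mono Set.subset_union_right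
    have hainj : Function.Injective a :=
      injective_of_infinite_shift' (fun i j hij => by rw [hsucc i, hsucc j, hij]) hAinf
    obtain ⟨k, hk⟩ := hcof ((p 0).comp (T : X →ₗ[𝕜] X))
      (by
        have hco : ⇑((p 0).comp (T : X →ₗ[𝕜] X)) = ⇑(p 0) ∘ ⇑T := rfl
        rw [hco]
        exact (hpc 0).comp T.continuous)
    have hk' : ∀ y, p 0 (T y) ≤ p k y := fun y => hk y
    refine tail_absorb' hainj (W := Set.range w) (D := Set.range d) (Sh := w '' Set.Iio k)
      ?_ (Set.infinite_range_of_injective hdinj) (by rw [← hA]; exact Set.subset_union_right)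
      (Set.infinite_range_of_injective hwinj) (by rw [← hA]; exact Set.subset_union_left)
      ((Set.finite_Iio k).image w) ?_
    · rintro z ⟨m, rfl⟩ ⟨n, hn⟩
      exact hdw n m hn
    · intro n hnW hnSh
      obtain ⟨m, hm⟩ := hnW
      have hmk : k ≤ m := by
        by_contra h
        exact hnSh ⟨m, Set.mem_Iio.mpr (by omega), hm⟩
      have h0 : p k (a n) = 0 := by
        have : a n ∈ K k := hKmono k m hmk ((hKmem m (a n)).mpr (by rw [← hm]; exact (hKmem m (w m)).mp (hwK m)))
        exact (hKmem k (a n)).mp this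
      have h1 : p 0 (a (n + 1)) = 0 := by
        refine le_antisymm ?_ (apply_nonneg _ _)
        rw [hsucc n]
        calc p 0 (T (a n)) ≤ p k (a n) := hk' _
          _ = 0 := h0
      have h2 : a (n + 1) ∈ Set.range w ∪ Set.range d := by
        rw [hA]
        exact ⟨n + 1, rfl⟩
      rcases h2 with h | h
      · exact h
      · exfalso
        obtain ⟨j, hj⟩ := h
        exact (hd j).2.1 (by rw [hj]; exact h1)
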